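/- Let F : ℝ → ℂ be integrable, supported in [0,∞), and let its Fourier transform F̂(ζ) = ∫₀^∞ F(t) e^{-iζt} dt. Let g : {Im ζ ≤ 0} → ℂ be holomorphic on {Im ζ < 0}, continuous up to the boundary, with |g(ζ)| ≤ C e^{-√|ζ| y₀} for some y₀ > 0 and all ζ with Im ζ ≤ 0. Assume F̂(ζ) → 0 uniformly in Re ζ as Im ζ → -∞ and F̂(ζ) → 0 uniformly in Im ζ ≤ 0 as |Re ζ| → ∞. Then for every t < 0, lim_{s→∞} (1/2π) ∫_{-s}^{s} F̂(ζ) g(ζ) e^{iζt} dζ = 0. -/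

import Mathlib

open MeasureTheory Complex Filter Set

private lemma aux_exp_sqrt_int {y₀ : ℝ} (hy₀ : 0 < y₀) :
    IntegrableOn (fun x : ℝ => Real.exp (-Real.sqrt |x| * y₀)) (Set.Ioi 0) := by
  have hcont : Continuous fun x : ℝ => Real.exp (-Real.sqrt |x| * y₀) :=
    Real.continuous_exp.comp ((Real.continuous_sqrt.comp _root_.continuous_abs).neg.mul continuous_const)
  have h1 : IntegrableOn (fun x : ℝ => Real.exp (-Real.sqrt |x| * y₀)) (Set.Ioc 0 1) :=
    hcont.integrableOn_Ioc
  have h2 : IntegrableOn (fun x : ℝ => Real.exp (-Real.sqrt |x| * y₀)) (Set.Ioi 1) := by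
    have hmaj : IntegrableOn (fun x : ℝ => 256 / y₀ ^ 4 * x ^ (-2 : ℝ)) (Set.Ioi 1) :=
      (integrableOn_Ioi_rpow_of_lt (by norm_num) one_pos).const_mul _
    refine hmaj.mono' hcont.aestronglyMeasurable.restrict ?_
    filter_upwards [ae_restrict_mem measurableSet_Ioi] with x hx
    have hx1 : (1:ℝ) ≤ x := le_of_lt hx
    have hx0 : (0:ℝ) < x := lt_of_lt_of_le one_pos hx1
    set u := Real.sqrt x with hu_def
    have hu0 : 0 < u := Real.sqrt_pos.mpr hx0
    have hu2 : u ^ 2 = x := Real.sq_sqrt hx0.le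
    have h4 : y₀ * u / 4 ≤ Real.exp (y₀ * u / 4) :=
      le_trans (by linarith) (Real.add_one_le_exp _)
    have hpow : (y₀ * u / 4) ^ 4 ≤ Real.exp (y₀ * u) := by
      calc (y₀ * u / 4) ^ 4 ≤ Real.exp (y₀ * u / 4) ^ 4 :=
            pow_le_pow_left₀ (by positivity) h4 4
        _ = Real.exp (4 * (y₀ * u / 4)) := by
            rw [← Real.exp_nat_mul]; norm_num
        _ = Real.exp (y₀ * u) := by ring_nf
    have hq : y₀ ^ 4 * x ^ 2 / 256 ≤ Real.exp (y₀ * u) := by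
      calc y₀ ^ 4 * x ^ 2 / 256 = (y₀ * u / 4) ^ 4 := by
            rw [← hu2]; ring
        _ ≤ Real.exp (y₀ * u) := hpow
    have habs : |x| = x := abs_of_pos hx0
    have hxpow : x ^ (-2 : ℝ) = (x ^ 2)⁻¹ := by
      rw [show ((-2 : ℝ)) = ((-2 : ℤ) : ℝ) by norm_num, Real.rpow_intCast]
      norm_num
    have hpos : (0:ℝ) < y₀ ^ 4 * x ^ 2 / 256 := by positivity
    have : Real.exp (-Real.sqrt |x| * y₀) ≤ (y₀ ^ 4 * x ^ 2 / 256)⁻¹ := by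
      rw [habs, ← hu_def, show -u * y₀ = -(y₀ * u) by ring, Real.exp_neg]
      exact inv_anti₀ hpos hq
    rw [Real.norm_eq_abs, abs_of_pos (Real.exp_pos _)]
    refine this.trans ?_
    rw [hxpow]
    rw [show (y₀ ^ 4 * x ^ 2 / 256)⁻¹ = 256 / y₀ ^ 4 * (x ^ 2)⁻¹ by
      field_simp]
  have := h1.union h2
  rwa [Set.Ioc_union_Ioi_eq_Ioi (by norm_num : (0:ℝ) ≤ 1)] at this

private lemma aux_re (ζ : ℂ) (τ : ℝ) : (-(Complex.I * ζ * τ)).re = ζ.im * τ := by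
  simp [Complex.mul_re]

private lemma aux_cont (F : ℝ → ℂ) (hF_int : Integrable F) :
    ContinuousOn (fun ζ : ℂ => ∫ τ in Set.Ioi (0:ℝ), F τ * Complex.exp (-(Complex.I * ζ * τ)))
      {ζ : ℂ | ζ.im ≤ 0} := by
  apply continuousOn_of_dominated (bound := fun τ => ‖F τ‖)
  · intro ζ _
    exact (hF_int.aestronglyMeasurable.restrict).mul
      ((Complex.continuous_exp.comp (by continuity)).aestronglyMeasurable.restrict)
  · intro ζ hζ
    filter_upwards [ae_restrict_mem measurableSet_Ioi] with τ hτ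
    rw [norm_mul]
    have h1 : ‖Complex.exp (-(Complex.I * ζ * τ))‖ ≤ 1 := by
      rw [Complex.norm_exp, Real.exp_le_one_iff, aux_re]
      have : ζ.im ≤ 0 := hζ
      nlinarith [le_of_lt (show (0:ℝ) < τ from hτ)]
    nlinarith [norm_nonneg (F τ), norm_nonneg (Complex.exp (-(Complex.I * ζ * τ)))]
  · exact hF_int.norm.restrict
  · exact Eventually.of_forall fun τ => (Continuous.continuousOn (by continuity))

private lemma aux_diff (F : ℝ → ℂ) (hF_int : Integrable F) {ζ₀ : ℂ} (hζ₀ : ζ₀.im < 0) :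
    DifferentiableAt ℂ
      (fun ζ : ℂ => ∫ τ in Set.Ioi (0:ℝ), F τ * Complex.exp (-(Complex.I * ζ * τ))) ζ₀ := by
  set δ := -ζ₀.im / 2 with hδ
  have hδ0 : 0 < δ := by rw [hδ]; linarith
  have key := hasDerivAt_integral_of_dominated_loc_of_deriv_le
    (μ := volume.restrict (Set.Ioi (0:ℝ)))
    (F := fun (ζ : ℂ) (τ : ℝ) => F τ * Complex.exp (-(Complex.I * ζ * τ)))
    (F' := fun (ζ : ℂ) (τ : ℝ) => F τ * (Complex.exp (-(Complex.I * ζ * τ)) * -(Complex.I * τ)))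
    (x₀ := ζ₀) (bound := fun τ => ‖F τ‖ * δ⁻¹) (Metric.ball_mem_nhds ζ₀ hδ0)
    (Eventually.of_forall fun ζ => (hF_int.aestronglyMeasurable.restrict).mul
      ((Complex.continuous_exp.comp (by continuity)).aestronglyMeasurable.restrict))
    ?_ ?_ ?_ ?_ ?_
  · exact key.2.differentiableAt
  · -- integrability at ζ₀
    refine (hF_int.norm.restrict (s := Set.Ioi 0)).mono'
      ((hF_int.aestronglyMeasurable.restrict).mul
        ((Complex.continuous_exp.comp (by continuity)).aestronglyMeasurable.restrict)) ?_
    filter_upwards [ae_restrict_mem measurableSet_Ioi] with τ hτ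
    rw [norm_mul]
    have h1 : ‖Complex.exp (-(Complex.I * ζ₀ * τ))‖ ≤ 1 := by
      rw [Complex.norm_exp, Real.exp_le_one_iff, aux_re]
      nlinarith [le_of_lt (show (0:ℝ) < τ from hτ)]
    nlinarith [norm_nonneg (F τ), norm_nonneg (Complex.exp (-(Complex.I * ζ₀ * τ)))]
  · -- F' measurable at ζ₀
    exact (hF_int.aestronglyMeasurable.restrict).mul
      ((Continuous.aestronglyMeasurable (by continuity)).restrict)
  · -- bound
    filter_upwards [ae_restrict_mem measurableSet_Ioi] with τ hτ
    intro ζ hζ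
    have hτ0 : (0:ℝ) < τ := hτ
    have him : ζ.im ≤ -δ := by
      have h1 : |(ζ - ζ₀).im| ≤ ‖ζ - ζ₀‖ := Complex.abs_im_le_norm _
      have h2 : ‖ζ - ζ₀‖ < δ := by
        rw [← Complex.dist_eq]; exact Metric.mem_ball.mp hζ
      have h3 : ζ.im - ζ₀.im ≤ |(ζ - ζ₀).im| := by
        rw [Complex.sub_im]; exact le_abs_self _
      have : ζ₀.im = -2 * δ := by rw [hδ]; ring
      linarith
    have hIt : ‖Complex.I * (τ:ℂ)‖ = τ := by
      simp [abs_of_pos hτ0]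
    have hnorm : ‖F τ * (Complex.exp (-(Complex.I * ζ * τ)) * -(Complex.I * τ))‖
        = ‖F τ‖ * (Real.exp (ζ.im * τ) * τ) := by
      rw [norm_mul, norm_mul, norm_neg, hIt,
        Complex.norm_exp, aux_re]
    rw [hnorm]
    have e1 : δ * τ ≤ Real.exp (δ * τ) := le_trans (by linarith [Real.add_one_le_exp (δ * τ)])
      (le_refl _)
    have e2 : Real.exp (δ * τ) * Real.exp (-(δ * τ)) = 1 := by
      rw [← Real.exp_add]; simp
    have e3 : (0:ℝ) < Real.exp (-(δ * τ)) := Real.exp_pos _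
    have hmono : Real.exp (ζ.im * τ) ≤ Real.exp (-(δ * τ)) := by
      apply Real.exp_le_exp.mpr; nlinarith
    have hin : Real.exp (-(δ * τ)) * τ ≤ δ⁻¹ := by
      rw [inv_eq_one_div, le_div_iff₀ hδ0]
      nlinarith [mul_le_mul_of_nonneg_right e1 e3.le]
    have hin2 : Real.exp (ζ.im * τ) * τ ≤ δ⁻¹ :=
      le_trans (mul_le_mul_of_nonneg_right hmono hτ0.le) hin
    exact mul_le_mul_of_nonneg_left hin2 (norm_nonneg _)
  · exact (hF_int.norm.restrict).mul_const _
  · -- differentiability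
    refine Eventually.of_forall fun τ => ?_
    intro ζ _
    have hlin : HasDerivAt (fun ζ : ℂ => -(Complex.I * ζ * (τ:ℂ))) (-(Complex.I * τ)) ζ := by
      have h := (((hasDerivAt_id ζ).const_mul Complex.I).mul_const ((τ:ℝ):ℂ)).neg
      simp only [mul_one] at h
      exact h
    exact (hlin.cexp).const_mul (F τ)

private lemma aux_norm_cexp (ζ : ℂ) (t : ℝ) :
    ‖Complex.exp (Complex.I * ζ * t)‖ = Real.exp (-ζ.im * t) := by
  rw [Complex.norm_exp]
  congr 1
  simp [Complex.mul_re]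

 in

set_option maxHeartbeats 1600000 in
/-- Paley–Wiener type causality: if F is integrable, supported in [0,∞), its
Fourier transform F̂ decays uniformly as Im ζ → -∞ and as |Re ζ| → ∞ (Im ζ ≤ 0),
and g is holomorphic in the lower half-plane, continuous up to the boundary, with
|g(ζ)| ≤ C e^{-√|ζ| y₀}, then for t < 0 the truncated inverse Fourier integrals
of F̂·g tend to 0. -/
theorem stmt_19 (F : ℝ → ℂ) (hF_int : Integrable F)
    (hF_supp : ∀ t : ℝ, t < 0 → F t = 0)
    (g : ℂ → ℂ) (C y₀ : ℝ) (hC : 0 < C) (hy₀ : 0 < y₀)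
    (hg_holo : DifferentiableOn ℂ g {ζ : ℂ | ζ.im < 0})
    (hg_cont : ContinuousOn g {ζ : ℂ | ζ.im ≤ 0})
    (hg_bound : ∀ ζ : ℂ, ζ.im ≤ 0 →
      ‖g ζ‖ ≤ C * Real.exp (-Real.sqrt (‖ζ‖) * y₀))
    (Fhat : ℂ → ℂ)
    (hFhat : ∀ ζ : ℂ, Fhat ζ = ∫ t in Set.Ioi (0:ℝ), F t * Complex.exp (-(Complex.I * ζ * t)))
    (hdecay_im : ∀ ε > (0:ℝ), ∃ R : ℝ, ∀ ζ : ℂ, ζ.im ≤ -R → ‖Fhat ζ‖ ≤ ε)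
    (hdecay_re : ∀ ε > (0:ℝ), ∃ R : ℝ, ∀ ζ : ℂ, ζ.im ≤ 0 → R ≤ |ζ.re| →
      ‖Fhat ζ‖ ≤ ε) :
    ∀ t : ℝ, t < 0 →
      Tendsto (fun s : ℝ =>
          (1 / (2 * Real.pi)) •
            ∫ ξ in (-s)..s, Fhat ξ * g ξ * Complex.exp (Complex.I * ξ * t))
        atTop (nhds 0) := by
  have hFc : ContinuousOn Fhat {ζ : ℂ | ζ.im ≤ 0} :=
    (aux_cont F hF_int).congr fun ζ _ => hFhat ζ
  have hFd : ∀ ζ : ℂ, ζ.im < 0 → DifferentiableAt ℂ Fhat ζ := fun ζ hζ =>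
    (aux_diff F hF_int hζ).congr_of_eventuallyEq (Filter.Eventually.of_forall hFhat)
  have hKint : MeasureTheory.IntegrableOn
      (fun x : ℝ => Real.exp (-Real.sqrt |x| * y₀)) (Set.Ioi 0) :=
    aux_exp_sqrt_int hy₀
  intro t ht
  set Φ : ℂ → ℂ := fun ζ => Fhat ζ * g ζ * Complex.exp (Complex.I * ζ * t) with hΦ
  have hopen : IsOpen {ζ : ℂ | ζ.im < 0} := isOpen_lt Complex.continuous_im continuous_const
  have hΦc : ContinuousOn Φ {ζ : ℂ | ζ.im ≤ 0} := by
    rw [hΦ]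
    exact (hFc.mul hg_cont).mul ((Complex.continuous_exp.comp (by continuity)).continuousOn)
  have hΦd : ∀ ζ : ℂ, ζ.im < 0 → DifferentiableAt ℂ Φ ζ := by
    intro ζ hζ
    have hg' : DifferentiableAt ℂ g ζ := hg_holo.differentiableAt (hopen.mem_nhds hζ)
    have hexp : DifferentiableAt ℂ (fun ζ : ℂ => Complex.exp (Complex.I * ζ * (t:ℂ))) ζ :=
      (((differentiable_id.const_mul Complex.I).mul_const ((t:ℝ):ℂ)).cexp).differentiableAt
    exact ((hFd ζ hζ).mul hg').mul hexp
  -- rectangle identity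
  have hrect : ∀ s μ : ℝ, 0 ≤ s → 0 ≤ μ →
      (∫ x : ℝ in (-s)..s, Φ x) = (∫ x : ℝ in (-s)..s, Φ (x + (-μ : ℝ) * Complex.I))
        + Complex.I • (∫ y : ℝ in (-μ)..0, Φ ((s:ℝ) + y * Complex.I))
        - Complex.I • (∫ y : ℝ in (-μ)..0, Φ ((-s : ℝ) + y * Complex.I)) := by
    intro s μ hs hμ
    have h := Complex.integral_boundary_rect_eq_zero_of_differentiable_on_off_countable Φ
      ⟨-s, -μ⟩ ⟨s, 0⟩ ∅ Set.countable_empty ?_ ?_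
    · have h2 : (∫ x : ℝ in (-s)..s, Φ (x + (-μ:ℝ) * Complex.I))
          - (∫ x : ℝ in (-s)..s, Φ (x + (0:ℝ) * Complex.I))
          + Complex.I • (∫ y : ℝ in (-μ)..0, Φ ((s:ℝ) + y * Complex.I))
          - Complex.I • (∫ y : ℝ in (-μ)..0, Φ ((-s:ℝ) + y * Complex.I)) = 0 := h
      have h3 : (∫ x : ℝ in (-s)..s, Φ (x + (0:ℝ) * Complex.I)) = ∫ x : ℝ in (-s)..s, Φ x := by
        congr 1; funext x; norm_num
      rw [h3] at h2
      simp only [smul_eq_mul] at h2 ⊢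
      linear_combination -h2
    · -- continuity on rectangle
      refine hΦc.mono ?_
      rintro z hz
      have hz2 : z.im ∈ Set.uIcc (-μ) (0:ℝ) := (Complex.mem_reProdIm.mp hz).2
      rw [Set.uIcc_of_le (by linarith : -μ ≤ (0:ℝ))] at hz2
      exact hz2.2
    · -- differentiability on interior
      rintro x ⟨hx, -⟩
      apply hΦd
      have hx2 : x.im ∈ Set.Ioo (min (-μ) (0:ℝ)) (max (-μ) 0) := (Complex.mem_reProdIm.mp hx).2
      have hmax : max (-μ) (0:ℝ) = 0 := max_eq_right (by linarith)
      rw [hmax] at hx2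
      exact hx2.2
  -- main tendsto
  have hmain : Tendsto (fun s : ℝ => ∫ ξ : ℝ in (-s)..s, Φ ξ) atTop (nhds 0) := by
    rw [NormedAddCommGroup.tendsto_nhds_zero]
    intro ε hε
    set Kf : ℝ → ℝ := fun x => Real.exp (-Real.sqrt |x| * y₀) with hKf
    have hKcont : Continuous Kf :=
      Real.continuous_exp.comp
        ((Real.continuous_sqrt.comp _root_.continuous_abs).neg.mul continuous_const)
    have hKpos : ∀ x, 0 < Kf x := fun x => Real.exp_pos _
    set K : ℝ := ∫ x in Set.Ioi (0:ℝ), Kf x with hK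
    have hK0 : 0 ≤ K := setIntegral_nonneg measurableSet_Ioi fun x _ => (hKpos x).le
    have hε₁0 : 0 < ε / (8 * (C * K + 1)) := by positivity
    obtain ⟨R₁, hR₁⟩ := hdecay_im _ hε₁0
    set ε₁ := ε / (8 * (C * K + 1)) with hε₁
    set μ := max R₁ 0 with hμdef
    have hμ0 : (0:ℝ) ≤ μ := le_max_right _ _
    have hε₂0 : 0 < ε / (8 * (μ * C + 1)) := by positivity
    obtain ⟨R₂, hR₂⟩ := hdecay_re _ hε₂0
    set ε₂ := ε / (8 * (μ * C + 1)) with hε₂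
    filter_upwards [eventually_ge_atTop (max R₂ 0)] with s hs
    have hs0 : (0:ℝ) ≤ s := le_trans (le_max_right _ _) hs
    have hsR : R₂ ≤ s := le_trans (le_max_left _ _) hs
    rw [hrect s μ hs0 hμ0]
    -- pointwise bound on the bottom edge
    have hbot_pt : ∀ x : ℝ, ‖Φ (↑x + (↑(-μ):ℂ) * Complex.I)‖ ≤ ε₁ * C * Kf x := by
      intro x
      set ζ : ℂ := ↑x + (↑(-μ):ℂ) * Complex.I with hζdef
      have him : ζ.im = -μ := by simp [hζdef]
      have hre : ζ.re = x := by simp [hζdef]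
      have h1 : ‖Fhat ζ‖ ≤ ε₁ :=
        hR₁ ζ (by rw [him]; exact neg_le_neg (le_max_left _ _))
      have h2 : ‖g ζ‖ ≤ C * Kf x := by
        refine (hg_bound ζ (by rw [him]; linarith)).trans ?_
        refine mul_le_mul_of_nonneg_left ?_ hC.le
        apply Real.exp_le_exp.mpr
        have habs : |x| ≤ ‖ζ‖ := by rw [← hre]; exact Complex.abs_re_le_norm ζ
        nlinarith [Real.sqrt_le_sqrt habs, Real.sqrt_nonneg |x|]
      have h3 : ‖Complex.exp (Complex.I * ζ * t)‖ ≤ 1 := by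
        rw [aux_norm_cexp, Real.exp_le_one_iff, him]
        nlinarith
      calc ‖Φ ζ‖ = ‖Fhat ζ‖ * ‖g ζ‖
            * ‖Complex.exp (Complex.I * ζ * t)‖ := by
            rw [hΦ]; simp [norm_mul]
        _ ≤ ε₁ * (C * Kf x) * 1 := by
            refine mul_le_mul (mul_le_mul h1 h2 (norm_nonneg _) hε₁0.le) h3
              (norm_nonneg _) ?_
            positivity
        _ = ε₁ * C * Kf x := by ring
    have hInt : ∀ a b : ℝ, IntervalIntegrable Kf volume a b :=
      fun a b => hKcont.intervalIntegrable _ _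
    have hbot : ‖∫ x : ℝ in (-s)..s, Φ (↑x + (↑(-μ):ℂ) * Complex.I)‖ ≤ ε₁ * C * (2 * K) := by
      refine le_trans (intervalIntegral.norm_integral_le_abs_of_norm_le
        (Eventually.of_forall fun x => hbot_pt x)
        ((continuous_const.mul hKcont).intervalIntegrable _ _)) ?_
      rw [show (fun x => ε₁ * C * Kf x) = fun x => (ε₁ * C) * Kf x from rfl,
        intervalIntegral.integral_const_mul]
      have hsym : (∫ x in (-s)..(0:ℝ), Kf x) = ∫ x in (0:ℝ)..s, Kf x := by
        have h := intervalIntegral.integral_comp_neg (a := (0:ℝ)) (b := s) (f := Kf)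
        simp only [neg_zero] at h
        rw [← h]
        apply intervalIntegral.integral_congr
        intro x _; simp [hKf, abs_neg]
      have hhalf : (∫ x in (0:ℝ)..s, Kf x) ≤ K := by
        rw [intervalIntegral.integral_of_le hs0, hK]
        exact setIntegral_mono_set hKint (Eventually.of_forall fun x => (hKpos x).le)
          (HasSubset.Subset.eventuallyLE Set.Ioc_subset_Ioi_self)
      have hnn : 0 ≤ ∫ x in (0:ℝ)..s, Kf x :=
        intervalIntegral.integral_nonneg hs0 fun x _ => (hKpos x).le
      have hsplit : (∫ x in (-s)..s, Kf x)
          = (∫ x in (-s)..(0:ℝ), Kf x) + ∫ x in (0:ℝ)..s, Kf x :=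
        (intervalIntegral.integral_add_adjacent_intervals (hInt _ _) (hInt _ _)).symm
      have e : (∫ x in (-s)..s, Kf x) = 2 * ∫ x in (0:ℝ)..s, Kf x := by
        rw [hsplit, hsym]; ring
      rw [e, _root_.abs_of_nonneg (by nlinarith [mul_nonneg hε₁0.le hC.le])]
      nlinarith [mul_nonneg hε₁0.le hC.le]
    -- side bounds
    have hside : ∀ c : ℝ, |c| = s →
        ‖∫ y : ℝ in (-μ)..0, Φ ((c:ℝ) + y * Complex.I)‖ ≤ μ * (ε₂ * C) := by
      intro c hc
      have hb := intervalIntegral.norm_integral_le_of_norm_le_const (C := ε₂ * C)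
        (f := fun y : ℝ => Φ ((c:ℝ) + y * Complex.I)) (a := -μ) (b := 0) ?_
      · refine hb.trans_eq ?_
        rw [sub_neg_eq_add, zero_add, _root_.abs_of_nonneg hμ0]; ring
      · intro y hy
        rw [Set.uIoc_of_le (by linarith : -μ ≤ (0:ℝ))] at hy
        set ζ : ℂ := ↑c + ↑y * Complex.I with hζdef
        have him : ζ.im = y := by simp [hζdef]
        have hre : ζ.re = c := by simp [hζdef]
        have h1 : ‖Fhat ζ‖ ≤ ε₂ :=
          hR₂ ζ (by rw [him]; exact hy.2) (by rw [hre, hc]; exact hsR)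
        have h2 : ‖g ζ‖ ≤ C := by
          refine (hg_bound ζ (by rw [him]; exact hy.2)).trans ?_
          have he1 : Real.exp (-Real.sqrt (‖ζ‖) * y₀) ≤ 1 := by
            rw [Real.exp_le_one_iff]
            nlinarith [Real.sqrt_nonneg (‖ζ‖)]
          nlinarith
        have h3 : ‖Complex.exp (Complex.I * ζ * t)‖ ≤ 1 := by
          rw [aux_norm_cexp, Real.exp_le_one_iff, him]
          nlinarith [hy.2]
        calc ‖Φ ζ‖ = ‖Fhat ζ‖ * ‖g ζ‖
              * ‖Complex.exp (Complex.I * ζ * t)‖ := by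
              rw [hΦ]; simp [norm_mul]
          _ ≤ ε₂ * C * 1 := by
              refine mul_le_mul (mul_le_mul h1 h2 (norm_nonneg _) hε₂0.le) h3
                (norm_nonneg _) ?_
              positivity
          _ = ε₂ * C := mul_one _
    have hnormI : ∀ X : ℂ, ‖Complex.I • X‖ = ‖X‖ := by
      intro X; rw [smul_eq_mul, norm_mul, Complex.norm_I, one_mul]
    have hcomb : ‖(∫ x : ℝ in (-s)..s, Φ (↑x + (↑(-μ):ℂ) * Complex.I))
        + Complex.I • (∫ y : ℝ in (-μ)..0, Φ ((s:ℝ) + y * Complex.I))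
        - Complex.I • (∫ y : ℝ in (-μ)..0, Φ ((-s:ℝ) + y * Complex.I))‖
        ≤ ε₁ * C * (2 * K) + μ * (ε₂ * C) + μ * (ε₂ * C) := by
      refine le_trans (norm_sub_le _ _) ?_
      refine add_le_add (le_trans (norm_add_le _ _) (add_le_add hbot ?_)) ?_
      · rw [hnormI]; exact hside s (_root_.abs_of_nonneg hs0)
      · rw [hnormI]
        exact hside (-s) (by rw [_root_.abs_neg]; exact _root_.abs_of_nonneg hs0)
    refine lt_of_le_of_lt hcomb ?_
    have hD1 : (0:ℝ) < 8 * (C * K + 1) := by positivity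
    have hD2 : (0:ℝ) < 8 * (μ * C + 1) := by positivity
    have f1 : ε₁ * C * (2 * K) ≤ ε / 4 := by
      rw [hε₁, div_mul_eq_mul_div, div_mul_eq_mul_div,
        div_le_div_iff₀ hD1 (by norm_num : (0:ℝ) < 4)]
      nlinarith [mul_nonneg hε.le (mul_nonneg hC.le hK0)]
    have f2 : μ * (ε₂ * C) ≤ ε / 8 := by
      rw [hε₂, div_mul_eq_mul_div, ← mul_div_assoc,
        div_le_div_iff₀ hD2 (by norm_num : (0:ℝ) < 8)]
      nlinarith [mul_nonneg hμ0 (mul_nonneg hε.le hC.le)]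
    linarith
  have final := hmain.const_smul ((1:ℝ) / (2 * Real.pi))
  rw [smul_zero] at final
  simpa only [hΦ] using final
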